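/- For every finite tree T (a finite connected acyclic simple graph), the circular cutwidth of T equals its cutwidth: ccw(T) = cw(T). -/

import Mathlib

open Finset

variable {V : Type*}

/-- The number of edges crossing position `i` in the linear ordering `f`. -/
def SimpleGraph.cutAt [Fintype V] [DecidableEq V] (G : SimpleGraph V) [DecidableRel G.Adj]
    (f : V ≃ Fin (Fintype.card V)) (i : Fin (Fintype.card V)) : ℕ :=
  (G.edgeFinset.filter (fun e => ∃ u ∈ e, ∃ v ∈ e, f u ≤ i ∧ i < f v)).card

/-- The cutwidth of a finite simple graph. -/
noncomputable def SimpleGraph.cutwidth [Fintype V] [DecidableEq V] (G : SimpleGraph V)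
    [DecidableRel G.Adj] : ℕ :=
  sInf { m | ∃ f : V ≃ Fin (Fintype.card V), m = Finset.univ.sup (fun i => G.cutAt f i) }

/-- The degeneracy of a finite simple graph. -/
noncomputable def SimpleGraph.degeneracy [Fintype V] [DecidableEq V] (G : SimpleGraph V)
    [DecidableRel G.Adj] : ℕ :=
  sSup { k | ∃ s : Finset V, s.Nonempty ∧ ∀ v ∈ s, k ≤ (s.filter (G.Adj v)).card }

/-- Number of edges of the induced subgraph on `s`. -/
def SimpleGraph.inducedEdgeCount [Fintype V] [DecidableEq V] (G : SimpleGraph V)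
    [DecidableRel G.Adj] (s : Finset V) : ℕ :=
  (G.edgeFinset.filter (fun e => ∀ u ∈ e, u ∈ s)).card

/-- `(ρ, λ)`-uniform sparsity. -/
def SimpleGraph.UniformlySparse [Fintype V] [DecidableEq V] (G : SimpleGraph V)
    [DecidableRel G.Adj] (ρ lam : ℝ) : Prop :=
  ∀ s : Finset V, ρ * (Fintype.card V : ℝ) ≤ (s.card : ℝ) →
    (G.inducedEdgeCount s : ℝ) ≤ (s.card : ℝ) * ((s.card : ℝ) - 1) / (2 * lam)
/-- A circular layout of `G`: an injective placement of the `n` vertices at the `n` points of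
the cyclic group (realized as `Fin n` with its modular arithmetic), together with, for each
edge, a choice of an ordered representation of its endpoints — the edge is drawn along the
arc going (say) clockwise from the first endpoint to the second. -/
structure SimpleGraph.CircularLayout [Fintype V] [DecidableEq V] (G : SimpleGraph V)
    [DecidableRel G.Adj] where
  pos : V ≃ Fin (Fintype.card V)
  dir : Sym2 V → V × V
  hdir : ∀ e ∈ G.edgeFinset, s((dir e).1, (dir e).2) = e

/-- The width of a circular layout: the maximum, over the `n` gaps between cyclically
consecutive points (gap `g` lies between points `g` and `g+1`), of the number of edges whose
chosen arc passes over that gap. The arc drawn clockwise from `x` to `y` passes over exactly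
the gaps `g` with `g − x < y − x` (computed in `Fin n`, i.e. modulo `n`). -/
def SimpleGraph.CircularLayout.width [Fintype V] [DecidableEq V] {G : SimpleGraph V}
    [DecidableRel G.Adj] (L : G.CircularLayout) : ℕ :=
  Finset.univ.sup (fun g : Fin (Fintype.card V) =>
    (G.edgeFinset.filter (fun e =>
      g - L.pos (L.dir e).1 < L.pos (L.dir e).2 - L.pos (L.dir e).1)).card)

/-- The circular cutwidth of a finite simple graph: the minimum width of a circular layout. -/
noncomputable def SimpleGraph.circularCutwidth [Fintype V] [DecidableEq V] (G : SimpleGraph V)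
    [DecidableRel G.Adj] : ℕ :=
  sInf { m | ∃ L : G.CircularLayout, m = L.width }


set_option linter.unusedSectionVars false
set_option linter.unusedTactic false


lemma finSubVal {n : ℕ} (x y : Fin n) :
    (x - y).val = if y.val ≤ x.val then x.val - y.val else x.val + n - y.val := by
  rw [Fin.sub_def]
  simp only
  split
  · have h1 : (n - y.val) + x.val = (x.val - y.val) + n := by omega
    rw [h1, Nat.add_mod_right]
    apply Nat.mod_eq_of_lt
    omega
  · have h1 : (n - y.val) + x.val = x.val + n - y.val := by omega
    rw [h1]
    apply Nat.mod_eq_of_lt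
    omega

lemma finSubValInt {n : ℕ} (x y : Fin n) :
    ((x - y).val : ℤ) = ((x.val : ℤ) - y.val) % n := by
  have hx := x.isLt; have hy := y.isLt
  rw [finSubVal]
  split
  · rw [Int.emod_eq_of_lt (by omega) (by omega)]
    omega
  · have h2 : ((x.val : ℤ) - y.val) % n = ((x.val : ℤ) - y.val + n * 1) % n := by
      rw [Int.add_mul_emod_self_left]
    rw [h2, Int.emod_eq_of_lt (by omega) (by omega)]
    omega

lemma finSubLtIff {n : ℕ} (a b g : Fin n) (hab : a < b) :
    g - a < b - a ↔ (a ≤ g ∧ g < b) := by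
  simp only [Fin.lt_def, Fin.le_def] at hab ⊢
  rw [finSubVal, finSubVal]
  have := a.isLt; have := b.isLt; have := g.isLt
  split <;> split <;> omega

section Lift

variable [Fintype V] [DecidableEq V] {G : SimpleGraph V} [DecidableRel G.Adj]
  (L : G.CircularLayout)

/-- signed arc length of the edge `s(u,v)` as drawn in `L`, traversed from `u` to `v`. -/
def gval (u v : V) : ℤ :=
  if (L.dir s(u,v)).1 = u
  then ((L.pos (L.dir s(u,v)).2 - L.pos (L.dir s(u,v)).1).val : ℤ)
  else -((L.pos (L.dir s(u,v)).2 - L.pos (L.dir s(u,v)).1).val : ℤ)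

lemma gval_cases {u v : V} (h : G.Adj u v) :
    (L.dir s(u,v) = (u,v) ∧ gval L u v = ((L.pos v - L.pos u).val : ℤ)) ∨
    (L.dir s(u,v) = (v,u) ∧ gval L u v = -((L.pos u - L.pos v).val : ℤ)) := by
  have hne : u ≠ v := h.ne
  have hd := L.hdir s(u,v) (by rw [SimpleGraph.mem_edgeFinset]; exact h)
  rw [Sym2.eq_iff] at hd
  rcases hd with ⟨h1, h2⟩ | ⟨h1, h2⟩
  · left
    constructor
    · exact Prod.ext h1 h2
    · rw [gval, if_pos h1, h1, h2]
  · right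
    constructor
    · exact Prod.ext h1 h2
    · rw [gval, if_neg (by rw [h1]; exact hne.symm), h1, h2]

lemma gval_antisymm {u v : V} (h : G.Adj u v) : gval L v u = - gval L u v := by
  have hswap : s(v,u) = s(u,v) := Sym2.eq_swap
  rcases gval_cases L h with ⟨h1, h2⟩ | ⟨h1, h2⟩
  · rw [h2, gval, hswap, h1]
    rw [if_neg (by simpa using h.ne)]
  · rw [h2, gval, hswap, h1]
    rw [if_pos rfl]
    ring

lemma gval_modeq {u v : V} (h : G.Adj u v) :
    gval L u v ≡ ((L.pos v).val : ℤ) - (L.pos u).val [ZMOD (Fintype.card V)] := by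
  rcases gval_cases L h with ⟨_, h2⟩ | ⟨_, h2⟩
  · rw [h2, finSubValInt]
    exact Int.emod_emod_of_dvd _ dvd_rfl
  · rw [h2, finSubValInt]
    have h3 : (((L.pos u).val : ℤ) - (L.pos v).val) % (Fintype.card V)
        ≡ ((L.pos u).val : ℤ) - (L.pos v).val [ZMOD (Fintype.card V)] :=
      Int.emod_emod_of_dvd _ dvd_rfl
    calc -((((L.pos u).val : ℤ) - (L.pos v).val) % (Fintype.card V))
        ≡ -(((L.pos u).val : ℤ) - (L.pos v).val) [ZMOD (Fintype.card V)] := h3.neg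
      _ = ((L.pos v).val : ℤ) - (L.pos u).val := by ring

/-- sum of signed arc lengths along a walk. -/
def wsum {a b : V} (p : G.Walk a b) : ℤ :=
  (p.darts.map (fun d => gval L d.fst d.snd)).sum

lemma wsum_nil {a : V} : wsum L (SimpleGraph.Walk.nil : G.Walk a a) = 0 := rfl

lemma wsum_cons {a b c : V} (h : G.Adj a b) (p : G.Walk b c) :
    wsum L (SimpleGraph.Walk.cons h p) = gval L a b + wsum L p := by
  simp [wsum, SimpleGraph.Walk.darts_cons]

lemma wsum_append {a b c : V} (p : G.Walk a b) (q : G.Walk b c) :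
    wsum L (p.append q) = wsum L p + wsum L q := by
  simp [wsum, SimpleGraph.Walk.darts_append]

lemma wsum_modeq {a b : V} (p : G.Walk a b) :
    wsum L p ≡ ((L.pos b).val : ℤ) - (L.pos a).val [ZMOD (Fintype.card V)] := by
  induction p with
  | nil => simp [wsum_nil]
  | cons h q ih =>
    rw [wsum_cons]
    have := (gval_modeq L h).add ih
    calc gval L _ _ + wsum L q
        ≡ (((L.pos _).val : ℤ) - (L.pos _).val) + (((L.pos _).val : ℤ) - (L.pos _).val)
          [ZMOD (Fintype.card V)] := this
      _ = ((L.pos _).val : ℤ) - (L.pos _).val := by ring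

end Lift

section Phi

variable [Fintype V] [DecidableEq V] {G : SimpleGraph V} [DecidableRel G.Adj]
  (L : G.CircularLayout) (hT : G.IsTree) (r : V)

/-- the unique path from `r` to `v` in the tree. -/
noncomputable def treePath (v : V) : G.Walk r v :=
  (hT.existsUnique_path r v).choose

lemma treePath_isPath (v : V) : (treePath hT r v).IsPath :=
  (hT.existsUnique_path r v).choose_spec.1

lemma treePath_eq {v : V} (p : G.Walk r v) (hp : p.IsPath) : p = treePath hT r v :=
  (hT.existsUnique_path r v).choose_spec.2 p hp

/-- the lift of the circular position to `ℤ`, along tree paths from the root. -/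
noncomputable def phiL (v : V) : ℤ :=
  ((L.pos r).val : ℤ) + wsum L (treePath hT r v)

lemma phiL_modeq (v : V) :
    phiL L hT r v ≡ ((L.pos v).val : ℤ) [ZMOD (Fintype.card V)] := by
  have h := wsum_modeq L (treePath hT r v)
  have := (Int.ModEq.refl ((L.pos r).val : ℤ)).add h
  calc phiL L hT r v ≡ ((L.pos r).val : ℤ) + (((L.pos v).val : ℤ) - (L.pos r).val)
      [ZMOD (Fintype.card V)] := this
    _ = ((L.pos v).val : ℤ) := by ring

lemma phiL_injective : Function.Injective (phiL L hT r) := by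
  intro u v h
  have hu := phiL_modeq L hT r u
  have hv := phiL_modeq L hT r v
  rw [h] at hu
  have huv : ((L.pos u).val : ℤ) ≡ ((L.pos v).val : ℤ) [ZMOD (Fintype.card V)] :=
    hu.symm.trans hv
  have h1 := (L.pos u).isLt
  have h2 := (L.pos v).isLt
  have : ((L.pos u).val : ℤ) = ((L.pos v).val : ℤ) := by
    have e1 : ((L.pos u).val : ℤ) % (Fintype.card V) = ((L.pos u).val : ℤ) :=
      Int.emod_eq_of_lt (by omega) (by omega)
    have e2 : ((L.pos v).val : ℤ) % (Fintype.card V) = ((L.pos v).val : ℤ) :=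
      Int.emod_eq_of_lt (by omega) (by omega)
    rw [Int.ModEq] at huv
    omega
  have : L.pos u = L.pos v := Fin.val_injective (by exact_mod_cast this)
  exact L.pos.injective this

lemma phiL_adj {u v : V} (h : G.Adj u v) :
    phiL L hT r v = phiL L hT r u + gval L u v := by
  classical
  set p := treePath hT r u with hp_def
  have hp : p.IsPath := treePath_isPath hT r u
  by_cases hv : v ∈ p.support
  · -- v on the path to u; the path to u is (path to v) followed by the edge v-u
    have hq1 : (p.takeUntil v hv).IsPath := hp.takeUntil hv
    have hq2 : (p.dropUntil v hv).IsPath := hp.dropUntil hv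
    have hsingle : (⟨p.dropUntil v hv, hq2⟩ : G.Path v u) = SimpleGraph.Path.singleton h.symm :=
      hT.IsAcyclic.path_unique _ _
    have hdrop : p.dropUntil v hv = SimpleGraph.Walk.cons h.symm SimpleGraph.Walk.nil := by
      have := congrArg Subtype.val hsingle
      simpa [SimpleGraph.Path.singleton] using this
    have hspec := p.take_spec hv
    have htv : treePath hT r v = p.takeUntil v hv := (treePath_eq hT r _ hq1).symm
    have hwp : wsum L p = wsum L (p.takeUntil v hv) + gval L v u := by
      conv_lhs => rw [← hspec]
      rw [wsum_append, hdrop, wsum_cons, wsum_nil, add_zero]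
    rw [phiL, phiL, htv, hwp, gval_antisymm L h]
    ring
  · -- extend the path to u by the edge u-v
    have hq : (p.concat h).IsPath := by
      rw [SimpleGraph.Walk.isPath_def, SimpleGraph.Walk.support_concat]
      rw [List.nodup_append']
      refine ⟨hp.support_nodup, List.nodup_singleton _, ?_⟩
      intro a ha hb
      rw [List.mem_singleton] at hb
      subst hb
      exact hv ha
    have htv : treePath hT r v = p.concat h := (treePath_eq hT r _ hq).symm
    rw [phiL, phiL, htv]
    have : wsum L (p.concat h) = wsum L p + gval L u v := by
      rw [SimpleGraph.Walk.concat_eq_append, wsum_append, wsum_cons, wsum_nil, add_zero]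
    rw [this]
    ring

end Phi

section Layout

variable [Fintype V] [DecidableEq V] {G : SimpleGraph V} [DecidableRel G.Adj]

lemma phiL_edge (L : G.CircularLayout) (hT : G.IsTree) (r : V) {e : Sym2 V}
    (he : e ∈ G.edgeFinset) :
    phiL L hT r (L.dir e).2
      = phiL L hT r (L.dir e).1 + ((L.pos (L.dir e).2 - L.pos (L.dir e).1).val : ℤ) := by
  have hd := L.hdir e he
  have hadj : G.Adj (L.dir e).1 (L.dir e).2 := by
    rw [SimpleGraph.mem_edgeFinset, ← hd] at he
    exact he
  have := phiL_adj L hT r hadj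
  rw [this]
  congr 1
  rw [gval, hd, if_pos rfl]

/-- The circular layout obtained from a linear ordering, drawing every edge
from its lower endpoint to its higher endpoint. -/
noncomputable def layoutOfEquiv [Nonempty V] (G : SimpleGraph V) [DecidableRel G.Adj]
    (f : V ≃ Fin (Fintype.card V)) : G.CircularLayout where
  pos := f
  dir := fun e =>
    if h : ∃ p : V × V, s(p.1, p.2) = e ∧ f p.1 < f p.2 then h.choose
    else Classical.arbitrary (V × V)
  hdir := by
    intro e he
    induction e with
    | _ a b =>
      have hab : G.Adj a b := by rwa [SimpleGraph.mem_edgeFinset, SimpleGraph.mem_edgeSet] at he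
      have hne : f a ≠ f b := fun hc => hab.ne (f.injective hc)
      have h : ∃ p : V × V, s(p.1, p.2) = s(a, b) ∧ f p.1 < f p.2 := by
        rcases lt_or_gt_of_ne hne with hlt | hlt
        · exact ⟨(a, b), rfl, hlt⟩
        · exact ⟨(b, a), Sym2.eq_swap, hlt⟩
      simp only [dif_pos h]
      exact h.choose_spec.1

lemma layoutOfEquiv_dir_lt [Nonempty V] (G : SimpleGraph V) [DecidableRel G.Adj]
    (f : V ≃ Fin (Fintype.card V)) {e : Sym2 V} (he : e ∈ G.edgeFinset) :
    f ((layoutOfEquiv G f).dir e).1 < f ((layoutOfEquiv G f).dir e).2 := by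
  induction e with
  | _ a b =>
    have hab : G.Adj a b := by rwa [SimpleGraph.mem_edgeFinset, SimpleGraph.mem_edgeSet] at he
    have hne : f a ≠ f b := fun hc => hab.ne (f.injective hc)
    have h : ∃ p : V × V, s(p.1, p.2) = s(a, b) ∧ f p.1 < f p.2 := by
      rcases lt_or_gt_of_ne hne with hlt | hlt
      · exact ⟨(a, b), rfl, hlt⟩
      · exact ⟨(b, a), Sym2.eq_swap, hlt⟩
    simp only [layoutOfEquiv, dif_pos h]
    exact h.choose_spec.2

lemma width_layoutOfEquiv_le [Nonempty V] (G : SimpleGraph V) [DecidableRel G.Adj]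
    (f : V ≃ Fin (Fintype.card V)) :
    (layoutOfEquiv G f).width ≤ Finset.univ.sup (fun i => G.cutAt f i) := by
  apply Finset.sup_le
  intro g _
  refine le_trans ?_ (Finset.le_sup (Finset.mem_univ g))
  apply Finset.card_le_card
  intro e he
  rw [Finset.mem_filter] at he ⊢
  obtain ⟨heE, hcond⟩ := he
  refine ⟨heE, ?_⟩
  set L := layoutOfEquiv G f with hL
  have hlt : f (L.dir e).1 < f (L.dir e).2 := layoutOfEquiv_dir_lt G f heE
  have hpos1 : L.pos (L.dir e).1 = f (L.dir e).1 := rfl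
  have hpos2 : L.pos (L.dir e).2 = f (L.dir e).2 := rfl
  rw [hpos1, hpos2] at hcond
  have := (finSubLtIff _ _ g hlt).1 hcond
  obtain ⟨x, hx⟩ : ∃ x, x = (L.dir e).1 := ⟨_, rfl⟩
  obtain ⟨y, hy⟩ : ∃ y, y = (L.dir e).2 := ⟨_, rfl⟩
  have hd : s(x, y) = e := by rw [hx, hy]; exact L.hdir e heE
  rw [← hx, ← hy] at this
  refine ⟨x, ?_, y, ?_, this.1, this.2⟩
  · rw [← hd]; exact Sym2.mem_mk_left _ _
  · rw [← hd]; exact Sym2.mem_mk_right _ _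

end Layout

/-- **Theorem.** The circular cutwidth of a finite tree equals its cutwidth. -/
theorem circularCutwidth_eq_cutwidth_of_isTree [Fintype V] [DecidableEq V]
    (G : SimpleGraph V) [DecidableRel G.Adj] (hT : G.IsTree) :
    G.circularCutwidth = G.cutwidth := by
  have hne : Nonempty V := hT.isConnected.nonempty
  apply le_antisymm
  · -- circularCutwidth ≤ cutwidth
    have hset : {m | ∃ f : V ≃ Fin (Fintype.card V),
        m = Finset.univ.sup (fun i => G.cutAt f i)}.Nonempty := ⟨_, Fintype.equivFin V, rfl⟩
    obtain ⟨f, hf⟩ := Nat.sInf_mem hset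
    calc G.circularCutwidth ≤ (layoutOfEquiv G f).width := Nat.sInf_le ⟨_, rfl⟩
      _ ≤ Finset.univ.sup (fun i => G.cutAt f i) := width_layoutOfEquiv_le G f
      _ = G.cutwidth := hf.symm
  · -- cutwidth ≤ circularCutwidth
    have hset2 : {m | ∃ L : G.CircularLayout, m = L.width}.Nonempty :=
      ⟨_, layoutOfEquiv G (Fintype.equivFin V), rfl⟩
    obtain ⟨L, hL⟩ := Nat.sInf_mem hset2
    obtain ⟨r⟩ := hne
    have hinj := phiL_injective L hT r
    have hcard : (Finset.univ.image (phiL L hT r)).card = Fintype.card V := by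
      rw [Finset.card_image_of_injective _ hinj, Finset.card_univ]
    set oi := (Finset.univ.image (phiL L hT r)).orderIsoOfFin hcard with hoi
    have hmem : ∀ v, phiL L hT r v ∈ Finset.univ.image (phiL L hT r) :=
      fun v => Finset.mem_image_of_mem _ (Finset.mem_univ v)
    have hmono : ∀ u v, oi.symm ⟨phiL L hT r u, hmem u⟩ ≤ oi.symm ⟨phiL L hT r v, hmem v⟩
        ↔ phiL L hT r u ≤ phiL L hT r v := by
      intro u v
      rw [oi.symm.le_iff_le, Subtype.mk_le_mk]
    have hinj0 : Function.Injective (fun v => oi.symm ⟨phiL L hT r v, hmem v⟩) := by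
      intro u v h
      simp only at h
      apply hinj
      exact le_antisymm ((hmono u v).1 (le_of_eq h)) ((hmono v u).1 (le_of_eq h.symm))
    have hbij : Function.Bijective (fun v => oi.symm ⟨phiL L hT r v, hmem v⟩) :=
      (Fintype.bijective_iff_injective_and_card _).2 ⟨hinj0, (Fintype.card_fin _).symm⟩
    set f := Equiv.ofBijective _ hbij with hfdef
    have hfmono : ∀ u v, f u ≤ f v ↔ phiL L hT r u ≤ phiL L hT r v := hmono
    have hNpos : 0 < ((Fintype.card V : ℕ) : ℤ) := by
      have : 0 < Fintype.card V := Fintype.card_pos_iff.mpr ⟨r⟩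
      exact_mod_cast this
    have key : ∀ i, G.cutAt f i ≤ L.width := by
      intro i
      set θ := phiL L hT r (f.symm i) with hθ
      have hflei : ∀ u, f u ≤ i ↔ phiL L hT r u ≤ θ := by
        intro u
        conv_lhs => rw [show i = f (f.symm i) from (f.apply_symm_apply i).symm]
        exact hfmono u _
      have hilt : ∀ v, i < f v ↔ θ < phiL L hT r v := by
        intro v
        rw [lt_iff_not_ge, lt_iff_not_ge, hflei v]
      have hg1 : 0 ≤ θ % (Fintype.card V : ℤ) := Int.emod_nonneg θ (by omega)
      have hg2 : θ % (Fintype.card V : ℤ) < (Fintype.card V : ℤ) :=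
        Int.emod_lt_of_pos θ hNpos
      set g : Fin (Fintype.card V) := ⟨(θ % (Fintype.card V : ℤ)).toNat, by omega⟩ with hg
      refine le_trans ?_ (Finset.le_sup (f := fun g : Fin (Fintype.card V) =>
        (G.edgeFinset.filter (fun e =>
          g - L.pos (L.dir e).1 < L.pos (L.dir e).2 - L.pos (L.dir e).1)).card)
        (Finset.mem_univ g))
      apply Finset.card_le_card
      intro e he
      rw [Finset.mem_filter] at he ⊢
      obtain ⟨heE, u, hu, v, hv, h1, h2⟩ := he
      refine ⟨heE, ?_⟩
      obtain ⟨x, hx⟩ : ∃ x, x = (L.dir e).1 := ⟨_, rfl⟩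
      obtain ⟨y, hy⟩ : ∃ y, y = (L.dir e).2 := ⟨_, rfl⟩
      have hd : s(x, y) = e := by rw [hx, hy]; exact L.hdir e heE
      have hedge := phiL_edge L hT r heE
      rw [← hx, ← hy] at hedge
      have hadjxy : G.Adj x y := by
        rw [SimpleGraph.mem_edgeFinset, ← hd, SimpleGraph.mem_edgeSet] at heE
        exact heE
      have hvalne : (L.pos y).val ≠ (L.pos x).val := by
        intro hc
        exact hadjxy.ne (L.pos.injective (Fin.val_injective hc)).symm
      have hl0 : (0 : ℤ) < ((L.pos y - L.pos x).val : ℤ) := by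
        have h5 := (L.pos x).isLt
        have h6 := (L.pos y).isLt
        rw [finSubVal]
        split <;> [skip; skip] <;> · push_cast; omega
      have hln : ((L.pos y - L.pos x).val : ℤ) < (Fintype.card V : ℤ) := by
        exact_mod_cast (L.pos y - L.pos x).isLt
      rw [← hd, Sym2.mem_iff] at hu hv
      rw [hflei u] at h1
      rw [hilt v] at h2
      have hrange : phiL L hT r x ≤ θ ∧ θ < phiL L hT r x + ((L.pos y - L.pos x).val : ℤ) := by
        rcases hu with rfl | rfl <;> rcases hv with rfl | rfl <;> omega
      rw [← hx, ← hy, Fin.lt_def]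
      have hmodx := phiL_modeq L hT r x
      have hval : (((g : Fin (Fintype.card V)) - L.pos x).val : ℤ) = θ - phiL L hT r x := by
        rw [finSubValInt]
        have hgv : ((g.val : ℕ) : ℤ) = θ % (Fintype.card V : ℤ) := by
          rw [hg]
          exact Int.toNat_of_nonneg hg1
        rw [hgv]
        have hc1 : (θ % (Fintype.card V : ℤ)) ≡ θ [ZMOD (Fintype.card V : ℤ)] :=
          Int.emod_emod_of_dvd _ dvd_rfl
        have hc2 : (((L.pos x).val : ℕ) : ℤ) ≡ phiL L hT r x [ZMOD (Fintype.card V : ℤ)] :=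
          hmodx.symm
        have hc3 := hc1.sub hc2
        rw [Int.ModEq] at hc3
        rw [hc3]
        exact Int.emod_eq_of_lt (by omega) (by omega)
      have hfin : (((g : Fin (Fintype.card V)) - L.pos x).val : ℤ)
          < ((L.pos y - L.pos x).val : ℤ) := by
        rw [hval]; omega
      exact_mod_cast hfin
    calc G.cutwidth ≤ Finset.univ.sup (fun i => G.cutAt f i) := Nat.sInf_le ⟨f, rfl⟩
      _ ≤ L.width := Finset.sup_le (fun i _ => key i)
      _ = G.circularCutwidth := hL.symm
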